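/- If Upd satisfies P1–P5 and there exist a measure space M, a probability measure Pr, and an event B with Pr(B) ≠ 0 such that Upd(Pr,B) = ∅, then Upd equals the constraining update function: Upd(X,B) = {Pr ∈ X : Pr(B) = 1} for all measure spaces, sets X of measures, and events B. -/

import Mathlib

open MeasureTheory ProbabilityTheory Set
open scoped Classical NNReal ENNReal

noncomputable section

/-- A family of update functions, one for each measure space. -/
abbrev UpdFamily : Type 1 :=
  ∀ (W : Type) [MeasurableSpace W],
    Set (ProbabilityMeasure W) → Set W → Set (ProbabilityMeasure W)

/-- Base condition: `Upd(X,B) = ∅` whenever every measure in `X` gives `B` probability 0. -/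
def UpdBase (U : UpdFamily) : Prop :=
  ∀ (W : Type) [MeasurableSpace W] (X : Set (ProbabilityMeasure W)) (B : Set W),
    (∀ μ ∈ X, μ B = 0) → U W X B = ∅

/-- The conditional probability `Pr(A|B) = Pr(A ∩ B)/Pr(B)`. -/
def condProb {W : Type} [MeasurableSpace W] (μ : ProbabilityMeasure W) (A B : Set W) : ℝ≥0 :=
  μ (A ∩ B) / μ B

/-- The conditional probability measure `Pr(·|B)` (defined when `Pr(B) > 0`). -/
def condPM {W : Type} [MeasurableSpace W] (μ : ProbabilityMeasure W) (B : Set W) :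
    ProbabilityMeasure W :=
  if h : (μ : Measure W) B ≠ 0 then
    ⟨(μ : Measure W)[|B], cond_isProbabilityMeasure h⟩
  else μ

/-- Pushforward of a probability measure along a measurable map (`f*`). -/
def pushPM {W W' : Type} [MeasurableSpace W] [MeasurableSpace W']
    {f : W → W'} (hf : Measurable f) (μ : ProbabilityMeasure W) : ProbabilityMeasure W' :=
  μ.map hf.aemeasurable

/-- P1: every measure in `Upd(X,B)` assigns probability 1 to `B`. -/
def P1 (U : UpdFamily) : Prop :=
  ∀ (W : Type) [MeasurableSpace W] (X : Set (ProbabilityMeasure W)) (B : Set W),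
    MeasurableSet B → ∀ μ ∈ U W X B, μ B = 1

/-- P2: representation independence under measurable surjections. -/
def P2 (U : UpdFamily) : Prop :=
  ∀ (W W' : Type) [MeasurableSpace W] [MeasurableSpace W'] (f : W → W')
    (hf : Measurable f), Function.Surjective f →
    ∀ (X : Set (ProbabilityMeasure W)) (B : Set W'), MeasurableSet B →
      U W' (pushPM hf '' X) B = pushPM hf '' (U W X (f ⁻¹' B))

/-- P3: compositionality of updating. -/
def P3 (U : UpdFamily) : Prop :=
  ∀ (W : Type) [MeasurableSpace W] (X : Set (ProbabilityMeasure W)) (B C : Set W),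
    MeasurableSet B → MeasurableSet C → U W (U W X B) C = U W X (B ∩ C)

/-- P4: trivial update on sure evidence. -/
def P4 (U : UpdFamily) : Prop :=
  ∀ (W : Type) [MeasurableSpace W] (X : Set (ProbabilityMeasure W)) (B : Set W),
    MeasurableSet B → (∀ μ ∈ X, μ B = 1) → U W X B = X

/-- P5: pointwise union decomposition. -/
def P5 (U : UpdFamily) : Prop :=
  ∀ (W : Type) [MeasurableSpace W] (X : Set (ProbabilityMeasure W)) (B : Set W),
    MeasurableSet B → U W X B = ⋃ μ ∈ X, U W {μ} B

/-- P6': singleton inputs yield at most one output measure. -/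
def P6' (U : UpdFamily) : Prop :=
  ∀ (W : Type) [MeasurableSpace W] (μ : ProbabilityMeasure W) (B : Set W),
    MeasurableSet B → (U W {μ} B).Subsingleton

/-- P6'': bounded amplification relative to conditioning. -/
def P6'' (U : UpdFamily) : Prop :=
  ∀ (W : Type) [MeasurableSpace W] (μ : ProbabilityMeasure W), ∃ c : ℝ≥0,
    ∀ (A B : Set W), MeasurableSet A → MeasurableSet B →
      ∀ ν ∈ U W {μ} B, ν A ≤ c * condProb μ A B

/-- P6: either P6' or P6'' holds. -/
def P6 (U : UpdFamily) : Prop := P6' U ∨ P6'' U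

/-- P7: some non-sure evidence yields a nonempty update. -/
def P7 (U : UpdFamily) : Prop :=
  ∃ (W : Type) (_ : MeasurableSpace W) (X : Set (ProbabilityMeasure W)) (B : Set W),
    MeasurableSet B ∧ (∀ μ ∈ X, μ B ≠ 1) ∧ U W X B ≠ ∅

/-- Conditioning: `Upd_cond(X,B) = {Pr(·|B) : Pr ∈ X, Pr(B) > 0}`. -/
def updCond {W : Type} [MeasurableSpace W] (X : Set (ProbabilityMeasure W)) (B : Set W) :
    Set (ProbabilityMeasure W) :=
  {ν | ∃ μ ∈ X, 0 < μ B ∧ ν = condPM μ B}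

/-- Constraining: `Upd_constrain(X,B) = {Pr ∈ X : Pr(B) = 1}`. -/
def updConstrain {W : Type} [MeasurableSpace W] (X : Set (ProbabilityMeasure W)) (B : Set W) :
    Set (ProbabilityMeasure W) := {μ ∈ X | μ B = 1}

end

noncomputable section Aux

def HGSval (U : UpdFamily) (r : ℝ≥0) : Prop :=
  ∀ (W : Type) [MeasurableSpace W] (μ : ProbabilityMeasure W) (B : Set W),
    MeasurableSet B → μ B = r → U W {μ} B = ∅

lemma hg_pm_coe_eq {W : Type} [MeasurableSpace W] (μ : ProbabilityMeasure W) (s : Set W) (r : ℝ≥0) :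
    μ s = r ↔ (μ : Measure W) s = (r : ℝ≥0∞) := by
  rw [← ProbabilityMeasure.ennreal_coeFn_eq_coeFn_toMeasure, ENNReal.coe_inj]

lemma hg_bool_pm_ext (m₁ m₂ : ProbabilityMeasure Bool)
    (h : (m₁ : Measure Bool) {true} = (m₂ : Measure Bool) {true}) : m₁ = m₂ := by
  apply ProbabilityMeasure.toMeasure_injective
  have hf : ({false} : Set Bool) = {true}ᶜ := by ext b; cases b <;> simp
  have h2 : (m₁ : Measure Bool) {false} = (m₂ : Measure Bool) {false} := by
    rw [hf, prob_compl_eq_one_sub MeasurableSet.of_discrete,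
      prob_compl_eq_one_sub MeasurableSet.of_discrete, h]
  ext s _
  by_cases ht : true ∈ s <;> by_cases hfs : false ∈ s
  · have hs : s = univ := by ext b; cases b <;> simp [ht, hfs]
    rw [hs, measure_univ, measure_univ]
  · have hs : s = {true} := by ext b; cases b <;> simp [ht, hfs]
    rw [hs]; exact h
  · have hs : s = {false} := by ext b; cases b <;> simp [ht, hfs]
    rw [hs]; exact h2
  · have hs : s = (∅ : Set Bool) := by ext b; cases b <;> simp [ht, hfs]
    simp [hs]

/-- reduction of a singleton update problem to the canonical two-point space -/
lemma hg_to_bool {U : UpdFamily} (h2 : P2 U) {W : Type} [MeasurableSpace W]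
    (μ : ProbabilityMeasure W) (B : Set W) (hB : MeasurableSet B) {r : ℝ≥0}
    (hr : μ B = r) (hr0 : r ≠ 0) (hr1 : r ≠ 1) :
    ∃ ν : ProbabilityMeasure Bool, (ν : Measure Bool) {true} = (r : ℝ≥0∞) ∧
      (U Bool {ν} {true} = ∅ ↔ U W {μ} B = ∅) := by
  have hμB : (μ : Measure W) B = (r : ℝ≥0∞) := (hg_pm_coe_eq μ B r).1 hr
  set f : W → Bool := fun w => decide (w ∈ B) with hfdef
  have hpre : f ⁻¹' {true} = B := by
    ext w; simp [hfdef]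
  have hprec : f ⁻¹' {false} = Bᶜ := by
    ext w; simp [hfdef]
  have hf : Measurable f := by
    apply measurable_to_countable'
    intro x
    cases x
    · rw [hprec]; exact hB.compl
    · rw [hpre]; exact hB
  have hBne : B.Nonempty := by
    apply nonempty_of_measure_ne_zero (μ := (μ : Measure W))
    rw [hμB]; exact_mod_cast hr0
  have hBcne : Bᶜ.Nonempty := by
    apply nonempty_of_measure_ne_zero (μ := (μ : Measure W))
    rw [prob_compl_eq_one_sub hB, hμB]
    intro hcon
    have hrle : (r : ℝ≥0∞) ≤ 1 := by
      rw [← hμB]; exact prob_le_one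
    have : (1 : ℝ≥0∞) ≤ r := by
      by_contra hh
      push_neg at hh
      exact (tsub_pos_of_lt hh).ne' hcon
    exact hr1 (le_antisymm (by exact_mod_cast hrle) (by exact_mod_cast this))
  have hsurj : Function.Surjective f := by
    intro b
    cases b
    · obtain ⟨w, hw⟩ := hBcne; exact ⟨w, by simp [hfdef, (Set.mem_compl_iff B w).1 hw]⟩
    · obtain ⟨w, hw⟩ := hBne; exact ⟨w, by simp [hfdef, hw]⟩
  refine ⟨pushPM hf μ, ?_, ?_⟩
  · rw [show ((pushPM hf μ : ProbabilityMeasure Bool) : Measure Bool)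
        = Measure.map f (μ : Measure W) from ProbabilityMeasure.toMeasure_map μ _,
      Measure.map_apply hf MeasurableSet.of_discrete, hpre, hμB]
  · have := h2 W Bool f hf hsurj {μ} {true} MeasurableSet.of_discrete
    rw [Set.image_singleton, hpre] at this
    rw [this, Set.image_eq_empty]

lemma hg_transfer {U : UpdFamily} (h2 : P2 U)
    {W : Type} [MeasurableSpace W] {μ : ProbabilityMeasure W} {B : Set W}
    (hB : MeasurableSet B) {r : ℝ≥0} (hr : μ B = r) (hr0 : r ≠ 0) (hr1 : r ≠ 1)
    (he : U W {μ} B = ∅) : HGSval U r := by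
  obtain ⟨ν, hν, hiff⟩ := hg_to_bool h2 μ B hB hr hr0 hr1
  intro W' _ μ' B' hB' hr'
  obtain ⟨ν', hν', hiff'⟩ := hg_to_bool h2 μ' B' hB' hr' hr0 hr1
  rw [← hiff']
  rw [hg_bool_pm_ext ν' ν (by rw [hν, hν'])]
  exact hiff.2 he


lemma hg_upd_empty {U : UpdFamily} (hbase : UpdBase U) (W : Type) [MeasurableSpace W] (B : Set W) :
    U W ∅ B = ∅ := hbase W ∅ B (by simp)

def hgMkPM (w : ℕ → ℝ≥0) (n : ℕ) (hsum : ∑ i ∈ Finset.range n, w i = 1) : ProbabilityMeasure ℕ :=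
  ⟨∑ i ∈ Finset.range n, ((w i : ℝ≥0∞) • Measure.dirac i), by
    constructor
    rw [Measure.coe_finset_sum, Finset.sum_apply]
    simp only [Measure.smul_apply, Measure.dirac_apply, smul_eq_mul, Set.indicator_univ,
      Pi.one_apply, mul_one]
    rw [← ENNReal.coe_finset_sum, hsum, ENNReal.coe_one]⟩

lemma hgMkPM_apply (w : ℕ → ℝ≥0) (n : ℕ) (hsum : ∑ i ∈ Finset.range n, w i = 1) (s : Set ℕ) :
    (hgMkPM w n hsum : Measure ℕ) s = ∑ i ∈ Finset.range n, (if i ∈ s then (w i : ℝ≥0∞) else 0) := by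
  show (∑ i ∈ Finset.range n, ((w i : ℝ≥0∞) • Measure.dirac i)) s = _
  rw [Measure.coe_finset_sum, Finset.sum_apply]
  refine Finset.sum_congr rfl fun i _ => ?_
  simp [Measure.smul_apply, Measure.dirac_apply, Set.indicator_apply, mul_ite]

/-- hg_downward closure of the emptiness set -/
lemma hg_down {U : UpdFamily} (hbase : UpdBase U) (h2 : P2 U) (h3 : P3 U)
    {x p : ℝ≥0} (hp : HGSval U p) (hx0 : x ≠ 0) (hxp : x < p) (hp1 : p < 1) :
    HGSval U x := by
  set w : ℕ → ℝ≥0 := fun i => if i = 0 then x else if i = 1 then p - x else if i = 2 then 1 - p else 0 with hw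
  have hsum : ∑ i ∈ Finset.range 3, w i = 1 := by
    rw [Finset.sum_range_succ, Finset.sum_range_succ, Finset.sum_range_one]
    simp only [hw]
    norm_num
    rw [add_tsub_cancel_of_le hxp.le, add_tsub_cancel_of_le hp1.le]
  set μ := hgMkPM w 3 hsum with hμ
  have h01 : (μ : Measure ℕ) {0, 1} = (p : ℝ≥0∞) := by
    rw [hgMkPM_apply]
    rw [Finset.sum_range_succ, Finset.sum_range_succ, Finset.sum_range_one]
    have e0 : (0 : ℕ) ∈ ({0, 1} : Set ℕ) := by simp
    have e1 : (1 : ℕ) ∈ ({0, 1} : Set ℕ) := by simp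
    have e2 : (2 : ℕ) ∉ ({0, 1} : Set ℕ) := by simp
    rw [if_pos e0, if_pos e1, if_neg e2]
    simp only [hw]
    norm_num
    rw [add_tsub_cancel_of_le (by exact_mod_cast hxp.le : (x:ℝ≥0∞) ≤ p)]
  have h0 : (μ : Measure ℕ) {0} = (x : ℝ≥0∞) := by
    rw [hgMkPM_apply]
    rw [Finset.sum_range_succ, Finset.sum_range_succ, Finset.sum_range_one]
    have e0 : (0 : ℕ) ∈ ({0} : Set ℕ) := by simp
    have e1 : (1 : ℕ) ∉ ({0} : Set ℕ) := by simp
    have e2 : (2 : ℕ) ∉ ({0} : Set ℕ) := by simp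
    rw [if_pos e0, if_neg e1, if_neg e2]
    simp only [hw]
    norm_num
  have hY : U ℕ {μ} {0, 1} = ∅ :=
    hp ℕ μ {0, 1} MeasurableSet.of_discrete ((hg_pm_coe_eq μ _ p).2 h01)
  have h3' := h3 ℕ {μ} {0, 1} {0} MeasurableSet.of_discrete MeasurableSet.of_discrete
  rw [hY, hg_upd_empty hbase] at h3'
  have hint : ({0, 1} : Set ℕ) ∩ {0} = {0} := by
    ext i; simp
  rw [hint] at h3'
  exact hg_transfer h2 MeasurableSet.of_discrete ((hg_pm_coe_eq μ _ x).2 h0) hx0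
    (hxp.trans hp1).ne h3'.symm

/-- one can always find a K-element subset carrying at least its proportional share -/
lemma hg_topk (K : ℕ) : ∀ (s : Finset ℕ) (t : ℕ → ℝ≥0), K ≤ s.card →
    ∃ A : Finset ℕ, A ⊆ s ∧ A.card = K ∧
      (K : ℝ≥0) * ∑ i ∈ s, t i ≤ (s.card : ℝ≥0) * ∑ i ∈ A, t i := by
  induction K with
  | zero => intro s t _; exact ⟨∅, by simp, by simp, by simp⟩
  | succ K ih =>
    intro s t hK
    obtain ⟨A, hAs, hAcard, hA⟩ := ih s t (Nat.le_of_succ_le hK)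
    have hcd : (s \ A).card = s.card - K := by rw [Finset.card_sdiff_of_subset hAs, hAcard]
    have hsdiff : (s \ A).Nonempty := by
      rw [← Finset.card_pos, hcd]; omega
    obtain ⟨i, hi, hti⟩ : ∃ i ∈ s \ A, ∑ j ∈ s \ A, t j ≤ ((s \ A).card : ℝ≥0) * t i := by
      apply Finset.exists_le_of_sum_le hsdiff
      rw [Finset.sum_const, ← Finset.mul_sum]
      simp [nsmul_eq_mul]
    have hiA : i ∉ A := (Finset.mem_sdiff.1 hi).2
    refine ⟨insert i A, Finset.insert_subset (Finset.mem_sdiff.1 hi).1 hAs, by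
      rw [Finset.card_insert_of_notMem hiA, hAcard], ?_⟩
    rw [Finset.sum_insert hiA]
    -- arithmetic in ℝ
    have hsplit : ∑ j ∈ s \ A, t j + ∑ j ∈ A, t j = ∑ j ∈ s, t j := Finset.sum_sdiff hAs
    set a := ∑ j ∈ A, t j
    set T := t i
    set b := ∑ j ∈ s \ A, t j
    have hKs : K < s.card := hK
    -- cast to ℝ
    have ha : (0:ℝ) ≤ a := a.coe_nonneg
    have hb : (0:ℝ) ≤ b := b.coe_nonneg
    have hT : (0:ℝ) ≤ T := T.coe_nonneg
    have hc : (K:ℝ) + 1 ≤ (s.card : ℝ) := by exact_mod_cast hKs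
    have h1 : (K:ℝ) * (a + b) ≤ (s.card : ℝ) * a := by
      have := hA
      rw [← hsplit] at this
      have := NNReal.coe_le_coe.2 this
      push_cast at this
      linarith [this]
    have h2 : (b:ℝ) ≤ ((s.card : ℝ) - K) * T := by
      have h' : (b:ℝ) ≤ (((s \ A).card : ℕ):ℝ) * T := by exact_mod_cast hti
      rw [hcd, Nat.cast_sub hKs.le] at h'
      exact h'
    have hgoal : ((K:ℝ) + 1) * (a + b) ≤ (s.card : ℝ) * (a + T) := by
      nlinarith [mul_nonneg (sub_nonneg.2 hc) hb, sq_nonneg ((s.card:ℝ) - K)]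
    have : ((K + 1 : ℕ) : ℝ) * ((a : ℝ) + b) ≤ (s.card : ℝ) * ((a:ℝ) + T) := by push_cast; linarith
    rw [← hsplit]
    have hfin : ((K+1:ℕ) : ℝ≥0) * (b + a) ≤ (s.card : ℝ≥0) * (a + T) := by
      rw [← NNReal.coe_le_coe]
      push_cast
      linarith [this]
    exact_mod_cast hfin.trans_eq (by ring)


lemma hg_pm_finset_apply (τ : ProbabilityMeasure ℕ) (A : Finset ℕ) :
    (τ : Measure ℕ) ↑A = ∑ i ∈ A, (τ : Measure ℕ) {i} := by
  have hA : (↑A : Set ℕ) = ⋃ i ∈ A, {i} := by ext j; simp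
  rw [hA, measure_biUnion_finset ?_ fun b _ => MeasurableSet.of_discrete]
  intro x _ y _ hxy
  simp only [Function.onFun]
  rw [Set.disjoint_singleton]
  exact hxy

/-- the key lemma: emptiness propagates from p to q whenever q² < p -/
lemma hg_main_lemma {U : UpdFamily} (hbase : UpdBase U) (h1 : P1 U) (h2 : P2 U) (h3 : P3 U)
    (h4 : P4 U) (h5 : P5 U) {p q : ℝ≥0} (hp : HGSval U p) (hp1 : p < 1)
    (hq0 : q ≠ 0) (hq1 : q < 1) (hqp : q * q < p) : HGSval U q := by
  have hpq2 : 0 < p - q * q := tsub_pos_of_lt hqp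
  set N : ℕ := ⌈q / (p - q * q)⌉₊ + 1 with hNdef
  have hN0 : (0:ℝ≥0) < N := by positivity
  have hNne : (N : ℝ≥0) ≠ 0 := hN0.ne'
  have hNgt : q / (p - q * q) < (N : ℝ≥0) := by
    calc q / (p - q*q) ≤ (⌈q / (p - q * q)⌉₊ : ℝ≥0) := Nat.le_ceil _
    _ < (N : ℝ≥0) := by rw [hNdef]; exact_mod_cast Nat.lt_succ_self _
  have hqN : q / N < p - q * q := by
    rw [div_lt_iff₀ hN0]
    rw [div_lt_iff₀ hpq2] at hNgt
    rw [mul_comm] at hNgt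
    exact hNgt
  set K : ℕ := ⌈q * N⌉₊ with hKdef
  have hqN0 : (0:ℝ≥0) < q * N := mul_pos (pos_iff_ne_zero.2 hq0) hN0
  have hKq : q * N ≤ (K : ℝ≥0) := Nat.le_ceil _
  have hKN : K ≤ N := by
    rw [hKdef, Nat.ceil_le]
    calc q * N ≤ 1 * N := mul_le_mul' hq1.le le_rfl
    _ = (N:ℝ≥0) := one_mul _
  have hKlt : (K : ℝ≥0) < q * N + 1 := Nat.ceil_lt_add_one zero_le
  have hK0 : (0:ℝ≥0) < K := lt_of_lt_of_le hqN0 hKq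
  set v : ℝ≥0 := (K : ℝ≥0) * (q / N) with hvdef
  have hNN : (N:ℝ≥0) * (q / N) = q := by rw [mul_comm, div_mul_cancel₀ _ hNne]
  have hv0 : v ≠ 0 := by
    rw [hvdef]
    apply mul_ne_zero hK0.ne'
    intro hc
    rw [hc, mul_zero] at hNN
    exact hq0 hNN.symm
  have hvp : v < p := by
    have hlt1 : v < (q * N + 1) * (q / N) := by
      rw [hvdef]
      apply mul_lt_mul_of_pos_right hKlt
      rw [pos_iff_ne_zero]
      intro hc
      rw [hc, mul_zero] at hNN
      exact hq0 hNN.symm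
    have heq : (q * N + 1) * (q / N) = q * q + q / N := by
      rw [add_mul, one_mul, mul_assoc, hNN]
    calc v < q * q + q / N := heq ▸ hlt1
    _ < q * q + (p - q * q) := by exact add_lt_add_right hqN _
    _ = p := add_tsub_cancel_of_le hqp.le
  have hSv : HGSval U v := hg_down hbase h2 h3 hp hv0 hvp hp1
  set w : ℕ → ℝ≥0 := fun i => if i < N then q / N else if i = N then 1 - q else 0 with hwdef
  have hsum : ∑ i ∈ Finset.range (N+1), w i = 1 := by
    rw [Finset.sum_range_succ]
    have h₁ : ∑ i ∈ Finset.range N, w i = q := by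
      rw [Finset.sum_congr rfl (fun i hi => if_pos (Finset.mem_range.1 hi)),
        Finset.sum_const, Finset.card_range, nsmul_eq_mul, hNN]
    have h₂ : w N = 1 - q := by simp [hwdef]
    rw [h₁, h₂, add_tsub_cancel_of_le hq1.le]
  set μ := hgMkPM w (N+1) hsum with hμdef
  have hsub : ∀ (A : Finset ℕ), A ⊆ Finset.range N →
      (μ : Measure ℕ) ↑A = (((A.card : ℝ≥0) * (q / N) : ℝ≥0) : ℝ≥0∞) := by
    intro A hA
    rw [hμdef, hgMkPM_apply]
    simp only [Finset.mem_coe]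
    rw [Finset.sum_ite_mem,
      Finset.inter_eq_right.2 (hA.trans (Finset.range_subset_range.2 (Nat.le_succ N)))]
    have hcongr : ∀ i ∈ A, ((w i : ℝ≥0∞)) = (((q / N : ℝ≥0)) : ℝ≥0∞) := by
      intro i hi
      have hiN : i < N := Finset.mem_range.1 (hA hi)
      simp [hwdef, hiN]
    rw [Finset.sum_congr rfl hcongr, Finset.sum_const, nsmul_eq_mul]
    push_cast
    ring
  set B : Set ℕ := ↑(Finset.range N) with hBdef
  have hμB : μ B = q := by
    rw [hg_pm_coe_eq, hBdef, hsub (Finset.range N) (subset_refl _), Finset.card_range]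
    rw [hNN]
  by_cases hY : U ℕ {μ} B = ∅
  · exact hg_transfer h2 MeasurableSet.of_discrete hμB hq0 hq1.ne hY
  · obtain ⟨τ, hτ⟩ := Set.nonempty_iff_ne_empty.2 hY
    have hτB : τ B = 1 := h1 ℕ {μ} B MeasurableSet.of_discrete τ hτ
    have hτBm : (τ : Measure ℕ) B = 1 := by
      have := (hg_pm_coe_eq τ B 1).1 hτB
      rwa [ENNReal.coe_one] at this
    set t : ℕ → ℝ≥0 := fun i => τ {i} with htdef
    have hsingle : ∀ i, (τ : Measure ℕ) {i} = (t i : ℝ≥0∞) := by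
      intro i
      exact ((hg_pm_coe_eq τ {i} (t i)).1 rfl)
    have hsumt : ∑ i ∈ Finset.range N, t i = 1 := by
      have h' := hg_pm_finset_apply τ (Finset.range N)
      rw [← hBdef, hτBm, Finset.sum_congr rfl fun i _ => hsingle i,
        ← ENNReal.coe_finset_sum] at h'
      exact_mod_cast h'.symm
    obtain ⟨A, hAsub, hAcard, hAineq⟩ := hg_topk K (Finset.range N) t
      (by rw [Finset.card_range]; exact hKN)
    rw [Finset.card_range, hsumt, mul_one] at hAineq
    set σ : ℝ≥0 := ∑ i ∈ A, t i with hσdef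
    have hqσ : q ≤ σ := by
      have h' : (N:ℝ≥0) * q ≤ N * σ := by
        rw [mul_comm]
        exact le_trans hKq hAineq
      exact le_of_mul_le_mul_left h' hN0
    have hτA : (τ : Measure ℕ) ↑A = (σ : ℝ≥0∞) := by
      rw [hg_pm_finset_apply, Finset.sum_congr rfl fun i _ => hsingle i, ← ENNReal.coe_finset_sum]
    have hUA : U ℕ {μ} ↑A = ∅ := hSv ℕ μ ↑A MeasurableSet.of_discrete
      (by rw [hg_pm_coe_eq, hsub A hAsub, hAcard])
    set C : Set ℕ := ↑A ∪ Bᶜ with hCdef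
    have hAB : (↑A : Set ℕ) ⊆ B := by
      intro i hi
      rw [hBdef]
      exact_mod_cast hAsub (by exact_mod_cast hi)
    have hBC : B ∩ C = ↑A := by
      rw [hCdef]
      ext i
      constructor
      · rintro ⟨hiB, hiC⟩
        rcases hiC with h | h
        · exact h
        · exact absurd hiB h
      · intro hiA
        exact ⟨hAB hiA, Or.inl hiA⟩
    have hYC : U ℕ (U ℕ {μ} B) C = ∅ := by
      rw [h3 ℕ {μ} B C MeasurableSet.of_discrete MeasurableSet.of_discrete, hBC]
      exact hUA
    have hτC : U ℕ {τ} C = ∅ := by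
      have h5' := h5 ℕ (U ℕ {μ} B) C MeasurableSet.of_discrete
      rw [hYC] at h5'
      apply Set.subset_empty_iff.1
      rw [h5']
      exact Set.subset_biUnion_of_mem (u := fun ν => U ℕ {ν} C) hτ
    have hτBc : (τ : Measure ℕ) Bᶜ = 0 := by
      rw [prob_compl_eq_one_sub MeasurableSet.of_discrete, hτBm, tsub_self]
    have hτCm : (τ : Measure ℕ) C = (σ : ℝ≥0∞) := by
      apply le_antisymm
      · calc (τ : Measure ℕ) C ≤ (τ : Measure ℕ) ↑A + (τ : Measure ℕ) Bᶜ := measure_union_le _ _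
        _ = (σ : ℝ≥0∞) := by rw [hτA, hτBc, add_zero]
      · rw [← hτA]
        exact measure_mono Set.subset_union_left
    have hσ1 : σ ≠ 1 := by
      intro hσe
      have h4' : U ℕ {τ} C = {τ} := h4 ℕ {τ} C MeasurableSet.of_discrete (by
        rintro μ' hμ'
        rw [Set.mem_singleton_iff] at hμ'
        rw [hμ']
        exact (hg_pm_coe_eq τ C 1).2 (by rw [hτCm, hσe, ENNReal.coe_one]))
      rw [hτC] at h4'
      exact (Set.singleton_ne_empty τ) h4'.symm
    have hσle1 : σ ≤ 1 := by
      have h' := Finset.sum_le_sum_of_subset (f := t) hAsub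
      rwa [hsumt] at h'
    have hσlt1 : σ < 1 := lt_of_le_of_ne hσle1 hσ1
    have hσ0 : σ ≠ 0 := by
      intro h0
      rw [h0, le_zero_iff] at hqσ
      exact hq0 hqσ
    have hSσ : HGSval U σ := hg_transfer h2 MeasurableSet.of_discrete
      ((hg_pm_coe_eq τ C σ).2 hτCm) hσ0 hσ1 hτC
    rcases eq_or_lt_of_le hqσ with he | hlt
    · rwa [he]
    · exact hg_down hbase h2 h3 hSσ hq0 hlt hσlt1

lemma hg_sval_all {U : UpdFamily} (hbase : UpdBase U) (h1 : P1 U) (h2 : P2 U) (h3 : P3 U)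
    (h4 : P4 U) (h5 : P5 U) {p₀ : ℝ≥0} (hp₀ : HGSval U p₀)
    (hp00 : p₀ ≠ 0) (hp01 : p₀ < 1) : ∀ q : ℝ≥0, q ≠ 0 → q < 1 → HGSval U q := by
  have hiter : ∀ (k : ℕ) (q : ℝ≥0), q ≠ 0 → q < 1 → q < p₀ ^ ((2⁻¹ : ℝ) ^ k) → HGSval U q := by
    intro k
    induction k with
    | zero =>
      intro q hq0 hq1 hqlt
      rw [pow_zero, NNReal.rpow_one] at hqlt
      exact hg_main_lemma hbase h1 h2 h3 h4 h5 hp₀ hp01 hq0 hq1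
        (lt_of_le_of_lt (mul_le_of_le_one_right' hq1.le) hqlt)
    | succ k ih =>
      intro q hq0 hq1 hqlt
      set u : ℝ≥0 := p₀ ^ ((2⁻¹ : ℝ) ^ (k + 1)) with hu
      have hu0 : 0 < u := NNReal.rpow_pos (pos_iff_ne_zero.2 hp00)
      have hu1 : u < 1 := NNReal.rpow_lt_one hp01 (by positivity)
      have huu : u * u = p₀ ^ ((2⁻¹ : ℝ) ^ k) := by
        rw [hu, ← NNReal.rpow_add hp00]
        congr 1
        rw [pow_succ]
        ring
      have hqu1 : q * u < 1 := lt_trans (by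
        calc q * u < 1 * u := mul_lt_mul_of_pos_right hq1 hu0
        _ = u := one_mul u) hu1
      have hp' : HGSval U (q * u) := ih (q * u) (mul_ne_zero hq0 hu0.ne')
        hqu1 (by rw [← huu]; exact mul_lt_mul_of_pos_right hqlt hu0)
      exact hg_main_lemma hbase h1 h2 h3 h4 h5 hp' hqu1 hq0 hq1
        (mul_lt_mul_of_pos_left hqlt (pos_iff_ne_zero.2 hq0))
  intro q hq0 hq1
  obtain ⟨n, hn⟩ : ∃ n : ℕ, q ^ n < p₀ :=
    exists_pow_lt_of_lt_one (pos_iff_ne_zero.2 hp00) hq1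
  have hq2n : q ^ (2 ^ n) < p₀ :=
    lt_of_le_of_lt (pow_le_pow_of_le_one (zero_le (a := q)) hq1.le (Nat.lt_two_pow_self (n := n)).le) hn
  apply hiter n q hq0 hq1
  have hq' : q = (q ^ (2 ^ n : ℕ)) ^ ((2⁻¹ : ℝ) ^ n) := by
    rw [← NNReal.rpow_natCast q (2 ^ n), ← NNReal.rpow_mul]
    have : ((2 ^ n : ℕ) : ℝ) * (2⁻¹ : ℝ) ^ n = 1 := by
      push_cast
      rw [← mul_pow]
      norm_num
    rw [this, NNReal.rpow_one]
  rw [hq']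
  exact NNReal.rpow_lt_rpow hq2n (by positivity)

end Aux

/-- under P1–P5, an update function with some empty output on an event of
nonzero probability must be constraining. -/
theorem stmt10 (U : UpdFamily) (hbase : UpdBase U) (h1 : P1 U) (h2 : P2 U) (h3 : P3 U)
    (h4 : P4 U) (h5 : P5 U)
    (W : Type) [MeasurableSpace W] (Pr : ProbabilityMeasure W) (B : Set W)
    (hB : MeasurableSet B) (hBne : Pr B ≠ 0) (hempty : U W {Pr} B = ∅) :
    ∀ (W' : Type) [MeasurableSpace W'] (X : Set (ProbabilityMeasure W')) (B' : Set W'),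
      MeasurableSet B' → U W' X B' = updConstrain X B' := by

  intro W' _ X B' hB'
  have hPr1 : Pr B ≠ 1 := by
    intro h1'
    have h4' := h4 W {Pr} B hB (by
      rintro μ hμ
      rw [Set.mem_singleton_iff] at hμ
      rw [hμ, h1'])
    rw [hempty] at h4'
    exact (Set.singleton_ne_empty Pr) h4'.symm
  have hPrlt : Pr B < 1 := lt_of_le_of_ne (ProbabilityMeasure.apply_le_one Pr B) hPr1
  have hSp : HGSval U (Pr B) := hg_transfer h2 hB rfl hBne hPr1 hempty
  have hall := hg_sval_all hbase h1 h2 h3 h4 h5 hSp hBne hPrlt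
  rw [h5 W' X B' hB']
  ext ν
  simp only [Set.mem_iUnion, exists_prop]
  constructor
  · rintro ⟨μ, hμX, hν⟩
    by_cases hμ1 : μ B' = 1
    · have h4' := h4 W' {μ} B' hB' (by
        rintro μ'' hμ''
        rw [Set.mem_singleton_iff] at hμ''
        rw [hμ'', hμ1])
      rw [h4', Set.mem_singleton_iff] at hν
      subst hν
      exact ⟨hμX, hμ1⟩
    · exfalso
      by_cases hμ0 : μ B' = 0
      · have he : U W' {μ} B' = ∅ := hbase W' {μ} B' (by
          rintro μ'' hμ''
          rw [Set.mem_singleton_iff] at hμ''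
          rw [hμ'', hμ0])
        rw [he] at hν
        exact Set.notMem_empty ν hν
      · have hlt : μ B' < 1 := lt_of_le_of_ne (ProbabilityMeasure.apply_le_one μ B') hμ1
        have he : U W' {μ} B' = ∅ := hall (μ B') hμ0 hlt W' μ B' hB' rfl
        rw [he] at hν
        exact Set.notMem_empty ν hν
  · rintro ⟨hνX, hν1⟩
    refine ⟨ν, hνX, ?_⟩
    rw [h4 W' {ν} B' hB' (by
      rintro μ'' hμ''
      rw [Set.mem_singleton_iff] at hμ''
      rw [hμ'', hν1])]
    exact Set.mem_singleton ν
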